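/- arXiv:1707.07424 — 2 statements merged into one kernel-verified Lean document; each statement's English description precedes it below -/
import Mathlib

section
/- Let α, β be real numbers with 0 ≤ α ≤ β and let f : [0,1] → ℝ be continuous. Then sup_{x ∈ [0,1]} |B_n^{α,β}(f;x) − B_n(f;x)| → 0 as n → ∞; that is, for every ε > 0 there exists N such that for all n ≥ N and all x ∈ [0,1], |B_n^{α,β}(f;x) − B_n(f;x)| ≤ ε. -/
/-- Bernstein basis polynomial `b_{n,k}(x) = (n choose k) x^k (1-x)^(n-k)`. -/
noncomputable def bernsteinBasis (n k : ℕ) (x : ℝ) : ℝ :=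
  (n.choose k : ℝ) * x ^ k * (1 - x) ^ (n - k)

/-- Bernstein-Stancu operator `B_n^{α,β}(f;x)`; for `α = β = 0` it is the Bernstein operator. -/
noncomputable def bernsteinStancu (n : ℕ) (α β : ℝ) (f : ℝ → ℝ) (x : ℝ) : ℝ :=
  ∑ k ∈ Finset.range (n + 1), bernsteinBasis n k x * f (((k : ℝ) + α) / ((n : ℝ) + β))

lemma bernsteinBasis_nonneg (n k : ℕ) {x : ℝ} (hx : x ∈ Set.Icc (0:ℝ) 1) :
    0 ≤ bernsteinBasis n k x := by
  obtain ⟨h0, h1⟩ := hx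
  unfold bernsteinBasis
  have h2 : (0:ℝ) ≤ 1 - x := by linarith
  positivity

lemma sum_bernsteinBasis (n : ℕ) (x : ℝ) :
    ∑ k ∈ Finset.range (n + 1), bernsteinBasis n k x = 1 := by
  have h := add_pow x (1 - x) n
  simp only [add_sub_cancel, one_pow] at h
  rw [h]
  apply Finset.sum_congr rfl
  intro k _
  unfold bernsteinBasis
  ring

theorem stancu_sub_bernstein_tendsto_zero_uniformly (α β : ℝ) (hα : 0 ≤ α) (hαβ : α ≤ β)
    (f : ℝ → ℝ) (hf : ContinuousOn f (Set.Icc 0 1)) :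
    ∀ ε > (0 : ℝ), ∃ N : ℕ, ∀ n : ℕ, N ≤ n → ∀ x ∈ Set.Icc (0 : ℝ) 1,
      |bernsteinStancu n α β f x - bernsteinStancu n 0 0 f x| ≤ ε := by
  intro ε hε
  have hβ : 0 ≤ β := le_trans hα hαβ
  have huc : UniformContinuousOn f (Set.Icc 0 1) :=
    isCompact_Icc.uniformContinuousOn_of_continuous hf
  rw [Metric.uniformContinuousOn_iff] at huc
  obtain ⟨δ, hδ, hδ'⟩ := huc ε hε
  obtain ⟨N₀, hN₀⟩ := exists_nat_gt (β / δ)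
  refine ⟨N₀ + 1, fun n hn x hx => ?_⟩
  have hn1 : 1 ≤ n := le_trans (Nat.le_add_left 1 N₀) hn
  have hnpos : (0:ℝ) < n := by exact_mod_cast hn1
  -- bound β/n < δ
  have hβn : β / n < δ := by
    have hNn : (β / δ) < n := lt_of_lt_of_le hN₀ (by exact_mod_cast le_trans (Nat.le_succ N₀) hn)
    have h1 : (β / δ) * δ = β := div_mul_cancel₀ β hδ.ne'
    have h2 := mul_lt_mul_of_pos_right hNn hδ
    rw [div_lt_iff₀ hnpos]
    linarith
  unfold bernsteinStancu
  rw [← Finset.sum_sub_distrib]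
  have key : ∀ k ∈ Finset.range (n + 1),
      |bernsteinBasis n k x * f (((k:ℝ) + α) / ((n:ℝ) + β)) -
        bernsteinBasis n k x * f (((k:ℝ) + 0) / ((n:ℝ) + 0))| ≤ bernsteinBasis n k x * ε := by
    intro k hk
    have hkn : (k:ℝ) ≤ n := by
      have : k ≤ n := Nat.lt_succ_iff.mp (Finset.mem_range.mp hk)
      exact_mod_cast this
    have hk0 : (0:ℝ) ≤ k := Nat.cast_nonneg k
    have hnβ : (0:ℝ) < n + β := by linarith
    have ha : ((k:ℝ) + α) / ((n:ℝ) + β) ∈ Set.Icc (0:ℝ) 1 := by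
      constructor
      · positivity
      · rw [div_le_one hnβ]; linarith
    have hc : ((k:ℝ) + 0) / ((n:ℝ) + 0) ∈ Set.Icc (0:ℝ) 1 := by
      constructor
      · positivity
      · rw [add_zero, add_zero, div_le_one hnpos]; exact hkn
    have hdist : |((k:ℝ) + α) / ((n:ℝ) + β) - ((k:ℝ) + 0) / ((n:ℝ) + 0)| < δ := by
      have heq : ((k:ℝ) + α) / ((n:ℝ) + β) - ((k:ℝ) + 0) / ((n:ℝ) + 0)
          = ((n:ℝ) * α - (k:ℝ) * β) / ((n:ℝ) * ((n:ℝ) + β)) := by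
        field_simp
        ring
      rw [heq, abs_div, abs_of_pos (show (0:ℝ) < (n:ℝ) * ((n:ℝ) + β) by positivity)]
      have hnum : |(n:ℝ) * α - (k:ℝ) * β| ≤ (n:ℝ) * β := by
        rw [abs_le]
        constructor
        · nlinarith
        · nlinarith
      calc |(n:ℝ) * α - (k:ℝ) * β| / ((n:ℝ) * ((n:ℝ) + β))
          ≤ ((n:ℝ) * β) / ((n:ℝ) * ((n:ℝ) + β)) := by gcongr
        _ ≤ β / n := by
            rw [div_le_div_iff₀ (by positivity) hnpos]
            nlinarith [mul_nonneg (mul_nonneg hβ hβ) hnpos.le]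
        _ < δ := hβn
    have hfd := hδ' _ ha _ hc (by rwa [Real.dist_eq])
    rw [Real.dist_eq] at hfd
    rw [← mul_sub, abs_mul, abs_of_nonneg (bernsteinBasis_nonneg n k hx)]
    exact mul_le_mul_of_nonneg_left hfd.le (bernsteinBasis_nonneg n k hx)
  calc |∑ k ∈ Finset.range (n + 1), (bernsteinBasis n k x * f (((k:ℝ) + α) / ((n:ℝ) + β)) -
        bernsteinBasis n k x * f (((k:ℝ) + 0) / ((n:ℝ) + 0)))|
      ≤ ∑ k ∈ Finset.range (n + 1), |bernsteinBasis n k x * f (((k:ℝ) + α) / ((n:ℝ) + β)) -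
        bernsteinBasis n k x * f (((k:ℝ) + 0) / ((n:ℝ) + 0))| := Finset.abs_sum_le_sum_abs _ _
    _ ≤ ∑ k ∈ Finset.range (n + 1), bernsteinBasis n k x * ε := Finset.sum_le_sum key
    _ = ε := by rw [← Finset.sum_mul, sum_bernsteinBasis, one_mul]
end

section
/- Let α, β be real numbers with 0 ≤ α ≤ β. Then for every natural number n ≥ 1 and every x ∈ [0,1], the Bernstein-Stancu operator applied to the test function e₂(t) = t² satisfies B_n^{α,β}(e₂;x) = Σ_{k=0}^{n} (n choose k) x^k (1−x)^{n−k} · ((k+α)/(n+β))² = x² + (n x(1−x) + (α − βx)(2nx + βx + α))/(n + β)². -/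
theorem stancu_apply_e2 (α β : ℝ) (hα : 0 ≤ α) (hαβ : α ≤ β)
    (n : ℕ) (hn : 1 ≤ n) (x : ℝ) (hx : x ∈ Set.Icc (0 : ℝ) 1) :
    ∑ k ∈ Finset.range (n + 1),
        (n.choose k : ℝ) * x ^ k * (1 - x) ^ (n - k) * (((k : ℝ) + α) / ((n : ℝ) + β)) ^ 2
      = x ^ 2 + ((n : ℝ) * x * (1 - x) + (α - β * x) * (2 * (n : ℝ) * x + β * x + α))
          / ((n : ℝ) + β) ^ 2 := by
  have hβ0 : (0:ℝ) ≤ β := le_trans hα hαβ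
  have hnb : (0:ℝ) < (n:ℝ) + β := by
    have : (1:ℝ) ≤ (n:ℝ) := by exact_mod_cast hn
    linarith
  have hc : ((n:ℝ) + β) ^ 2 ≠ 0 := by positivity
  set b : ℕ → ℝ := fun k => (n.choose k : ℝ) * x ^ k * (1 - x) ^ (n - k) with hbdef
  have hb : ∀ k, (bernsteinPolynomial ℝ n k).eval x = b k := by
    intro k; simp [bernsteinPolynomial, hbdef, mul_assoc]
  have h0 : ∑ k ∈ Finset.range (n + 1), b k = 1 := by
    have := congrArg (Polynomial.eval x) (bernsteinPolynomial.sum ℝ n)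
    simpa [Polynomial.eval_finset_sum, hb] using this
  have h1 : ∑ k ∈ Finset.range (n + 1), (k : ℝ) * b k = (n : ℝ) * x := by
    have := congrArg (Polynomial.eval x) (bernsteinPolynomial.sum_smul ℝ n)
    simpa [Polynomial.eval_finset_sum, hb] using this
  have h2 : ∑ k ∈ Finset.range (n + 1), (k : ℝ) * ((k : ℝ) - 1) * b k
      = (n : ℝ) * ((n : ℝ) - 1) * x ^ 2 := by
    have := congrArg (Polynomial.eval x) (bernsteinPolynomial.sum_mul_smul ℝ n)
    simp [Polynomial.eval_finset_sum, hb] at this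
    have hcast : ∀ k ∈ Finset.range (n + 1),
        ((k * (k - 1) : ℕ) : ℝ) * b k = (k : ℝ) * ((k : ℝ) - 1) * b k := by
      intro k _
      rcases k with _ | m
      · simp
      · push_cast [Nat.succ_sub_one]; ring_nf
    rw [← Finset.sum_congr rfl hcast]
    have hncast : ((n * (n - 1) : ℕ) : ℝ) = (n : ℝ) * ((n : ℝ) - 1) := by
      rcases n with _ | m
      · simp
      · push_cast [Nat.succ_sub_one]; ring
    rw [← hncast]
    convert this using 2 <;> push_cast <;> ring
  have step : ∑ k ∈ Finset.range (n + 1),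
      (n.choose k : ℝ) * x ^ k * (1 - x) ^ (n - k) * (((k : ℝ) + α) / ((n : ℝ) + β)) ^ 2
      = (∑ k ∈ Finset.range (n + 1),
          ((k : ℝ) * ((k : ℝ) - 1) * b k + (2 * α + 1) * ((k : ℝ) * b k) + α ^ 2 * b k))
        / ((n : ℝ) + β) ^ 2 := by
    rw [Finset.sum_div]
    refine Finset.sum_congr rfl fun k _ => ?_
    rw [div_pow]
    field_simp
    ring
  rw [step, Finset.sum_add_distrib, Finset.sum_add_distrib, ← Finset.mul_sum, ← Finset.mul_sum,
    h0, h1, h2]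
  field_simp
  ring
end
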